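/- Let n ≥ 2 and let h be an n×n real symmetric matrix satisfying h i j = 0 whenever i ≠ j and both i, j lie among the first n−1 indices, and h i i > 0 for every i among the first n−1 indices. Assume h n n = Σ_{i<n} (h i n)² / h i i. Then the minimum of the quadratic form ξ ↦ Σ_{i,j} h i j · ξ i · ξ j over the unit sphere {ξ ∈ ℝⁿ : |ξ| = 1} equals 0, and it is attained precisely at the two unit vectors ± v/|v|, where v is the vector with v i = −(h i n)/(h i i) for i < n and v n = 1. -/
import Mathlib


/-- The minimum of the quadratic form of a singular "arrowhead" symmetric matrix
over the unit sphere is `0`, attained precisely at the two unit vectors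
`± v / |v|`. -/
theorem stmt_4 (n : ℕ) (hn : 2 ≤ n) (h : Matrix (Fin n) (Fin n) ℝ)
    (hsymm : ∀ i j : Fin n, h i j = h j i)
    (hdiag : ∀ i j : Fin n, i ≠ j → (i : ℕ) < n - 1 → (j : ℕ) < n - 1 → h i j = 0)
    (hpos : ∀ i : Fin n, (i : ℕ) < n - 1 → 0 < h i i)
    (hnn : h ⟨n - 1, by omega⟩ ⟨n - 1, by omega⟩ =
      ∑ i ∈ Finset.univ.filter (fun i : Fin n => (i : ℕ) < n - 1),
        (h i ⟨n - 1, by omega⟩) ^ 2 / h i i) :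
    let v : Fin n → ℝ := fun i =>
      if (i : ℕ) < n - 1 then -(h i ⟨n - 1, by omega⟩) / h i i else 1
    let u : Fin n → ℝ := (Real.sqrt (∑ i : Fin n, (v i) ^ 2))⁻¹ • v
    IsLeast {r : ℝ | ∃ ξ : Fin n → ℝ, ∑ i : Fin n, (ξ i) ^ 2 = 1 ∧
        ∑ i : Fin n, ∑ j : Fin n, h i j * ξ i * ξ j = r} 0 ∧
    (∀ ξ : Fin n → ℝ, ∑ i : Fin n, (ξ i) ^ 2 = 1 →
      (∑ i : Fin n, ∑ j : Fin n, h i j * ξ i * ξ j = 0 ↔ ξ = u ∨ ξ = -u)) := by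
  intro v u
  set N : Fin n := ⟨n - 1, by omega⟩ with hNdef
  set T : Finset (Fin n) := Finset.univ.filter (fun i : Fin n => (i : ℕ) < n - 1)
    with hTdef
  have hne : ∀ i : Fin n, i ≠ N ↔ (i : ℕ) < n - 1 := by
    intro i
    have h1 := i.isLt
    constructor
    · intro hi
      by_contra hc
      exact hi (Fin.ext (by simp only [hNdef]; omega))
    · intro hi hc
      rw [hc] at hi
      simp only [hNdef] at hi
      omega
  have hmemT : ∀ i : Fin n, i ∈ T ↔ i ≠ N := by
    intro i; simp [hTdef, hne]
  have hTlt : ∀ i ∈ T, (i : ℕ) < n - 1 := by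
    intro i hi; exact (Finset.mem_filter.mp hi).2
  have hNT : N ∉ T := by
    intro hc; exact (hmemT N).mp hc rfl
  have huniv : (Finset.univ : Finset (Fin n)) = insert N T := by
    ext i
    simp only [Finset.mem_univ, Finset.mem_insert, hmemT, true_iff]
    by_cases hi : i = N
    · exact Or.inl hi
    · exact Or.inr hi
  have hhne : ∀ i ∈ T, h i i ≠ 0 := fun i hi => ne_of_gt (hpos i (hTlt i hi))
  -- key identity
  have key : ∀ ξ : Fin n → ℝ,
      (∑ i : Fin n, ∑ j : Fin n, h i j * ξ i * ξ j)
        = ∑ i ∈ T, h i i * (ξ i + h i N / h i i * ξ N) ^ 2 := by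
    intro ξ
    have inner : ∀ i ∈ T, (∑ j : Fin n, h i j * ξ i * ξ j)
        = h i N * ξ i * ξ N + h i i * ξ i ^ 2 := by
      intro i hi
      rw [huniv, Finset.sum_insert hNT]
      congr 1
      rw [Finset.sum_eq_single_of_mem i hi]
      · ring
      · intro j hj hji
        rw [hdiag i j (Ne.symm hji) (hTlt i hi) (hTlt j hj)]
        ring
    calc (∑ i : Fin n, ∑ j : Fin n, h i j * ξ i * ξ j)
        = (∑ j : Fin n, h N j * ξ N * ξ j)
            + ∑ i ∈ T, (∑ j : Fin n, h i j * ξ i * ξ j) := by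
          rw [huniv, Finset.sum_insert hNT]
      _ = (h N N * ξ N * ξ N + ∑ j ∈ T, h j N * ξ N * ξ j)
            + ∑ i ∈ T, (h i N * ξ i * ξ N + h i i * ξ i ^ 2) := by
          rw [Finset.sum_congr rfl inner]
          congr 1
          rw [huniv, Finset.sum_insert hNT]
          congr 1
          exact Finset.sum_congr rfl fun j _ => by rw [hsymm N j]
      _ = ∑ i ∈ T, ((h i N ^ 2 / h i i) * (ξ N * ξ N)
            + h i N * ξ N * ξ i + (h i N * ξ i * ξ N + h i i * ξ i ^ 2)) := by
          rw [hnn, Finset.sum_mul, Finset.sum_mul, ← Finset.sum_add_distrib,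
            ← Finset.sum_add_distrib]
          exact Finset.sum_congr rfl fun i _ => by ring
      _ = ∑ i ∈ T, h i i * (ξ i + h i N / h i i * ξ N) ^ 2 := by
          refine Finset.sum_congr rfl fun i hi => ?_
          have h0 := hhne i hi
          field_simp
          ring
  -- nonnegativity
  have hnonneg : ∀ ξ : Fin n → ℝ,
      0 ≤ ∑ i : Fin n, ∑ j : Fin n, h i j * ξ i * ξ j := by
    intro ξ
    rw [key ξ]
    exact Finset.sum_nonneg fun i hi =>
      mul_nonneg (hpos i (hTlt i hi)).le (sq_nonneg _)
  -- facts about v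
  have hvN : v N = 1 := by
    simp only [v, hNdef]
    rw [if_neg (by omega)]
  have hvi : ∀ i ∈ T, v i = -(h i N) / h i i := by
    intro i hi
    simp only [v]
    rw [if_pos (hTlt i hi)]
  set S : ℝ := ∑ i : Fin n, (v i) ^ 2 with hSdef
  have hS1 : 1 ≤ S := by
    have hle : v N ^ 2 ≤ S :=
      Finset.single_le_sum (fun i _ => sq_nonneg (v i)) (Finset.mem_univ N)
    rw [hvN] at hle
    linarith
  have hSpos : 0 < S := lt_of_lt_of_le one_pos hS1
  have hsqrtpos : 0 < Real.sqrt S := Real.sqrt_pos.mpr hSpos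
  set c : ℝ := (Real.sqrt S)⁻¹ with hcdef
  have hcpos : 0 < c := inv_pos.mpr hsqrtpos
  have hui : ∀ i, u i = c * v i := fun i => rfl
  have hc2 : c ^ 2 * S = 1 := by
    rw [hcdef, ← Real.sqrt_inv, Real.sq_sqrt (inv_nonneg.mpr hSpos.le)]
    exact inv_mul_cancel₀ (ne_of_gt hSpos)
  have hunorm : ∑ i : Fin n, (u i) ^ 2 = 1 := by
    have : ∑ i : Fin n, (u i) ^ 2 = c ^ 2 * S := by
      rw [hSdef, Finset.mul_sum]
      exact Finset.sum_congr rfl fun i _ => by rw [hui]; ring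
    rw [this, hc2]
  -- Q vanishes on multiples of v
  have hQv : ∀ t : ℝ,
      ∑ i : Fin n, ∑ j : Fin n, h i j * (t • v) i * (t • v) j = 0 := by
    intro t
    rw [key]
    refine Finset.sum_eq_zero fun i hi => ?_
    have h0 := hhne i hi
    have : (t • v) i + h i N / h i i * (t • v) N = 0 := by
      simp only [Pi.smul_apply, smul_eq_mul, hvN, hvi i hi]
      field_simp
      ring
    rw [this]
    ring
  have hQu : ∑ i : Fin n, ∑ j : Fin n, h i j * u i * u j = 0 := hQv c
  have hQnegu : ∑ i : Fin n, ∑ j : Fin n, h i j * (-u) i * (-u) j = 0 := by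
    have := hQv (-c)
    have hne : (-c) • v = -u := by
      funext i; simp [hui, neg_mul]
    rwa [hne] at this
  refine ⟨⟨⟨u, hunorm, hQu⟩, ?_⟩, ?_⟩
  · rintro r ⟨ξ, -, hQ⟩
    rw [← hQ]
    exact hnonneg ξ
  · intro ξ hξ
    constructor
    · intro hQ0
      -- each term vanishes
      rw [key ξ] at hQ0
      have hterm : ∀ i ∈ T, h i i * (ξ i + h i N / h i i * ξ N) ^ 2 = 0 :=
        (Finset.sum_eq_zero_iff_of_nonneg fun i hi =>
          mul_nonneg (hpos i (hTlt i hi)).le (sq_nonneg _)).mp hQ0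
      have hxi : ∀ i : Fin n, ξ i = ξ N * v i := by
        intro i
        by_cases hi : i = N
        · rw [hi, hvN]; ring
        · have hiT : i ∈ T := (hmemT i).mpr hi
          have h0 := hhne i hiT
          have := hterm i hiT
          have hsq : (ξ i + h i N / h i i * ξ N) ^ 2 = 0 := by
            rcases mul_eq_zero.mp this with hc | hc
            · exact absurd hc h0
            · exact hc
          have := pow_eq_zero_iff (n := 2) (by norm_num) |>.mp hsq
          rw [hvi i hiT]
          have : ξ i = -(h i N / h i i * ξ N) := by linarith
          rw [this]
          ring
      have hxN2 : ξ N ^ 2 * S = 1 := by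
        rw [← hξ, hSdef, Finset.mul_sum]
        exact Finset.sum_congr rfl fun i _ => by rw [hxi i]; ring
      have hsq : ξ N ^ 2 = c ^ 2 :=
        mul_right_cancel₀ (ne_of_gt hSpos) (by rw [hxN2, hc2])
      rcases sq_eq_sq_iff_eq_or_eq_neg.mp hsq with hcc | hcc
      · left
        funext i
        rw [hxi i, hcc, hui]
      · right
        funext i
        rw [hxi i, hcc]
        show -c * v i = -(u i)
        rw [hui]
        ring
    · rintro (rfl | rfl)
      · exact hQu
      · exact hQnegu
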